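/- If each ∇f_j is L_j-Lipschitz, then the second moment of the SVRG estimator's deviation is bounded: E[‖N(∇f_i(x) − ∇f_i(x̃)) + ∇f(x̃) − ∇f(x)‖²] ≤ N Σ_{j=1}^N L_j² ‖x − x̃‖², for i uniform on {1,…,N}. -/

import Mathlib

open scoped RealInnerProductSpace BigOperators

noncomputable section

/-- ℝⁿ as a Euclidean (Hilbert) space. -/
abbrev En (n : ℕ) := EuclideanSpace ℝ (Fin n)

/-- A proper extended-real-valued function: not identically +∞ and never −∞. -/
def ProperFun {n : ℕ} (g : En n → EReal) : Prop := (∃ x, g x ≠ ⊤) ∧ ∀ x, g x ≠ ⊥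

/-- Convexity for extended-real-valued functions. -/
def ConvexFunE {n : ℕ} (g : En n → EReal) : Prop :=
  ∀ x y : En n, ∀ a b : ℝ, 0 ≤ a → 0 ≤ b → a + b = 1 →
    g (a • x + b • y) ≤ (a : EReal) * g x + (b : EReal) * g y

/-- The objective of the proximal problem: z ↦ (1/2)‖z − x‖² + τ g(z). -/
def proxObj {n : ℕ} (g : En n → EReal) (τ : ℝ) (x z : En n) : EReal :=
  (((1 : ℝ)/2 * ‖z - x‖^2 : ℝ) : EReal) + (τ : EReal) * g z

/-- `p` is a minimizer of the proximal objective, i.e. `p = prox_{τ g}(x)`. -/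
def IsProx {n : ℕ} (g : En n → EReal) (τ : ℝ) (x p : En n) : Prop :=
  ∀ z, proxObj g τ x p ≤ proxObj g τ x z

/-- The convex subdifferential of an extended-real-valued function. -/
def Subdiff {n : ℕ} (g : En n → EReal) (x : En n) : Set (En n) :=
  {h | ∀ z, g x + ((⟪h, z - x⟫ : ℝ) : EReal) ≤ g z}


/-- If each ∇f_j is L_j-Lipschitz, the second moment of the SVRG estimator deviation
is bounded: E[‖N(∇f_i(x) − ∇f_i(x̃)) + ∇f(x̃) − ∇f(x)‖²] ≤ N Σ_j L_j² ‖x − x̃‖². -/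
theorem svrg_second_moment_bound {n N : ℕ} (hN : 0 < N)
    (f : Fin N → En n → ℝ) (hdiff : ∀ i, Differentiable ℝ (f i))
    (L : Fin N → ℝ) (hL : ∀ j, 0 ≤ L j)
    (hlip : ∀ j, LipschitzWith (Real.toNNReal (L j)) (gradient (f j)))
    (F : En n → ℝ) (hF : ∀ y, F y = ∑ j, f j y)
    (x xt : En n) :
    (N : ℝ)⁻¹ * ∑ i : Fin N,
        ‖(N : ℝ) • (gradient (f i) x - gradient (f i) xt)
          + gradient F xt - gradient F x‖^2
      ≤ (N : ℝ) * (∑ j : Fin N, (L j)^2) * ‖x - xt‖^2 := by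

  have hgrad : ∀ y, gradient F y = ∑ j, gradient (f j) y := by
    intro y
    have hFe : F = fun y => ∑ j, f j y := funext hF
    rw [hFe, gradient, fderiv_fun_sum (fun j _ => (hdiff j).differentiableAt)]
    simp [gradient, map_sum]
  set g : Fin N → En n := fun i => gradient (f i) x - gradient (f i) xt with hg
  set s : En n := ∑ i, g i with hs
  have hrw : ∀ i : Fin N, (N:ℝ) • (gradient (f i) x - gradient (f i) xt)
      + gradient F xt - gradient F x = (N:ℝ) • g i - s := by
    intro i
    simp only [hgrad, hg, hs]
    rw [Finset.sum_sub_distrib]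
    abel
  have hnorm : ∀ i, ‖g i‖ ≤ L i * ‖x - xt‖ := by
    intro i
    have := (hlip i).dist_le_mul x xt
    simpa [hg, dist_eq_norm, Real.coe_toNNReal _ (hL i)] using this
  have hsum : ∑ i, ‖(N:ℝ) • g i - s‖^2 ≤ (N:ℝ)^2 * ∑ i, ‖g i‖^2 := by
    have expand : ∀ i : Fin N, ‖(N:ℝ) • g i - s‖^2
        = ‖(N:ℝ) • g i‖^2 - 2 * ⟪(N:ℝ) • g i, s⟫ + ‖s‖^2 := fun i =>
      norm_sub_sq_real _ _
    have hinner : ∑ i, ⟪g i, s⟫ = ‖s‖^2 := by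
      rw [← sum_inner, ← hs, real_inner_self_eq_norm_sq]
    calc ∑ i, ‖(N:ℝ) • g i - s‖^2
        = ∑ i, (‖(N:ℝ) • g i‖^2 - 2 * ⟪(N:ℝ) • g i, s⟫ + ‖s‖^2) := by
          simp_rw [expand]
      _ = (N:ℝ)^2 * ∑ i, ‖g i‖^2 - (N:ℝ) * ‖s‖^2 := by
          simp_rw [Finset.sum_add_distrib, Finset.sum_sub_distrib, norm_smul,
            real_inner_smul_left, mul_pow, ← Finset.mul_sum, hinner,
            Finset.sum_const, Finset.card_univ, Fintype.card_fin, nsmul_eq_mul]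
          have : |(N:ℝ)| = (N:ℝ) := abs_of_nonneg (Nat.cast_nonneg N)
          rw [Real.norm_eq_abs, this]
          ring
      _ ≤ (N:ℝ)^2 * ∑ i, ‖g i‖^2 := by
          nlinarith [sq_nonneg ‖s‖, Nat.cast_nonneg (α := ℝ) N]
  have hNpos : (0:ℝ) < N := Nat.cast_pos.mpr hN
  have hsum2 : ∑ i, ‖g i‖^2 ≤ (∑ j, (L j)^2) * ‖x - xt‖^2 := by
    rw [Finset.sum_mul]
    apply Finset.sum_le_sum
    intro i _
    have h1 : ‖g i‖^2 ≤ (L i * ‖x - xt‖)^2 :=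
      pow_le_pow_left₀ (norm_nonneg _) (hnorm i) 2
    calc ‖g i‖^2 ≤ (L i * ‖x - xt‖)^2 := h1
      _ = (L i)^2 * ‖x - xt‖^2 := by ring
  calc (N:ℝ)⁻¹ * ∑ i : Fin N, ‖(N:ℝ) • (gradient (f i) x - gradient (f i) xt)
          + gradient F xt - gradient F x‖^2
      = (N:ℝ)⁻¹ * ∑ i, ‖(N:ℝ) • g i - s‖^2 := by simp_rw [hrw]
    _ ≤ (N:ℝ)⁻¹ * ((N:ℝ)^2 * ∑ i, ‖g i‖^2) := by
        apply mul_le_mul_of_nonneg_left hsum (by positivity)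
    _ = (N:ℝ) * ∑ i, ‖g i‖^2 := by
        field_simp
    _ ≤ (N:ℝ) * ((∑ j, (L j)^2) * ‖x - xt‖^2) :=
        mul_le_mul_of_nonneg_left hsum2 (le_of_lt hNpos)
    _ = (N:ℝ) * (∑ j : Fin N, (L j)^2) * ‖x - xt‖^2 := by ring
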